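/- For all real a and b > 0, the second derivative in a of F(a) = ∫_{-1}^{1} √(((1-av)²+b²)/(1-v²)) dv equals ∫_{-1}^{1} b²v² / (((1-av)²+b²)^{3/2}·√(1-v²)) dv, and this quantity is strictly positive; hence F is strictly convex in a. -/

import Mathlib

open Real MeasureTheory intervalIntegral Set
open scoped Interval


-- derivative lemmas
lemma lemA {b v : ℝ} (hb : 0 < b) (hv : v ∈ Set.Ioo (-1:ℝ) 1) (x : ℝ) :
    HasDerivAt (fun a : ℝ => Real.sqrt (((1 - a * v) ^ 2 + b ^ 2) / (1 - v ^ 2)))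
      (-(v * (1 - x * v)) / (Real.sqrt ((1 - x * v) ^ 2 + b ^ 2) * Real.sqrt (1 - v ^ 2))) x := by
  have h1v : 0 < 1 - v ^ 2 := by nlinarith [hv.1, hv.2]
  have hQx : 0 < (1 - x * v) ^ 2 + b ^ 2 := by positivity
  have heq : (fun a : ℝ => Real.sqrt (((1 - a * v) ^ 2 + b ^ 2) / (1 - v ^ 2)))
      = fun a : ℝ => Real.sqrt ((1 - a * v) ^ 2 + b ^ 2) * (Real.sqrt (1 - v ^ 2))⁻¹ := by
    funext a
    rw [Real.sqrt_div (by positivity), div_eq_mul_inv]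
  rw [heq]
  have hL : HasDerivAt (fun a : ℝ => 1 - a * v) (-v) x := by
    simpa using ((hasDerivAt_id x).mul_const v).const_sub 1
  have hd : HasDerivAt (fun a : ℝ => (1 - a * v) ^ 2 + b ^ 2) (2 * (1 - x * v) * (-v)) x := by
    simpa using ((hL.pow 2).add_const (b ^ 2))
  have hsq := (hd.sqrt (ne_of_gt hQx)).mul_const (Real.sqrt (1 - v ^ 2))⁻¹
  refine hsq.congr_deriv ?_
  symm
  have hsQ : 0 < Real.sqrt ((1 - x * v) ^ 2 + b ^ 2) := Real.sqrt_pos.mpr hQx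
  have hs : 0 < Real.sqrt (1 - v ^ 2) := Real.sqrt_pos.mpr h1v
  field_simp



lemma lemB {b v : ℝ} (hb : 0 < b) (hv : v ∈ Set.Ioo (-1:ℝ) 1) (x : ℝ) :
    HasDerivAt (fun a : ℝ =>
        -(v * (1 - a * v)) / (Real.sqrt ((1 - a * v) ^ 2 + b ^ 2) * Real.sqrt (1 - v ^ 2)))
      (b ^ 2 * v ^ 2 /
        (((1 - x * v) ^ 2 + b ^ 2) ^ ((3 : ℝ) / 2) * Real.sqrt (1 - v ^ 2))) x := by
  have h1v : 0 < 1 - v ^ 2 := by nlinarith [hv.1, hv.2]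
  have hQx : 0 < (1 - x * v) ^ 2 + b ^ 2 := by positivity
  have hsQ : 0 < Real.sqrt ((1 - x * v) ^ 2 + b ^ 2) := Real.sqrt_pos.mpr hQx
  have hs : 0 < Real.sqrt (1 - v ^ 2) := Real.sqrt_pos.mpr h1v
  have heq : (fun a : ℝ =>
      -(v * (1 - a * v)) / (Real.sqrt ((1 - a * v) ^ 2 + b ^ 2) * Real.sqrt (1 - v ^ 2)))
      = fun a : ℝ =>
        (-(v * (1 - a * v)) / Real.sqrt ((1 - a * v) ^ 2 + b ^ 2)) * (Real.sqrt (1 - v ^ 2))⁻¹ := by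
    funext a
    rw [div_mul_eq_div_mul_one_div, one_div]
  rw [heq]
  have hL : HasDerivAt (fun a : ℝ => 1 - a * v) (-v) x := by
    simpa using ((hasDerivAt_id x).mul_const v).const_sub 1
  have hN : HasDerivAt (fun a : ℝ => -(v * (1 - a * v))) (v * v) x := by
    have := hL.const_mul (-v)
    simp only [neg_mul] at this
    simpa [neg_mul_neg] using this
  have hd : HasDerivAt (fun a : ℝ => (1 - a * v) ^ 2 + b ^ 2) (2 * (1 - x * v) * (-v)) x := by
    simpa using ((hL.pow 2).add_const (b ^ 2))
  have hD := hd.sqrt (ne_of_gt hQx)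
  have hdiv := (hN.div hD (ne_of_gt hsQ)).mul_const (Real.sqrt (1 - v ^ 2))⁻¹
  refine hdiv.congr_deriv ?_
  symm
  have h32 : ((1 - x * v) ^ 2 + b ^ 2) ^ ((3 : ℝ) / 2)
      = (Real.sqrt ((1 - x * v) ^ 2 + b ^ 2)) ^ 3 := by
    rw [show ((3 : ℝ) / 2) = (1 / 2 : ℝ) * (3 : ℕ) by norm_num,
      Real.rpow_mul hQx.le, Real.rpow_natCast, ← Real.sqrt_eq_rpow]
  rw [h32]
  have hr : Real.sqrt ((1 - x * v) ^ 2 + b ^ 2) ^ 2 = (1 - x * v) ^ 2 + b ^ 2 :=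
    Real.sq_sqrt hQx.le
  field_simp
  rw [mul_comm v x, hr]
  ring



lemma lemBint : IntervalIntegrable
    (fun v : ℝ => (1 - v) ^ (-(1/2) : ℝ) + (1 + v) ^ (-(1/2) : ℝ)) volume (-1) 1 := by
  have h1 : IntervalIntegrable (fun x : ℝ => x ^ (-(1/2) : ℝ)) volume 2 0 :=
    intervalIntegral.intervalIntegrable_rpow' (by norm_num)
  have h2 : IntervalIntegrable (fun x : ℝ => x ^ (-(1/2) : ℝ)) volume 0 2 :=
    intervalIntegral.intervalIntegrable_rpow' (by norm_num)
  have hA := h1.comp_sub_left 1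
  have hB := h2.comp_add_right 1
  norm_num at hA hB
  exact hA.add (by simpa [add_comm] using hB)

lemma lemComp {v : ℝ} (hv : v ∈ Set.Ioo (-1:ℝ) 1) :
    1 / Real.sqrt (1 - v ^ 2) ≤ (1 - v) ^ (-(1/2) : ℝ) + (1 + v) ^ (-(1/2) : ℝ) := by
  have h1 : 0 < 1 - v := by linarith [hv.2]
  have h2 : 0 < 1 + v := by linarith [hv.1]
  have hs : Real.sqrt (1 - v ^ 2) = Real.sqrt (1 - v) * Real.sqrt (1 + v) := by
    rw [← Real.sqrt_mul h1.le]; ring_nf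
  have e1 : (1 - v) ^ (-(1/2) : ℝ) = (Real.sqrt (1 - v))⁻¹ := by
    rw [Real.rpow_neg h1.le, Real.sqrt_eq_rpow]
  have e2 : (1 + v) ^ (-(1/2) : ℝ) = (Real.sqrt (1 + v))⁻¹ := by
    rw [Real.rpow_neg h2.le, Real.sqrt_eq_rpow]
  have hs1 : 0 < Real.sqrt (1 - v) := Real.sqrt_pos.mpr h1
  have hs2 : 0 < Real.sqrt (1 + v) := Real.sqrt_pos.mpr h2
  have hy2 : Real.sqrt (1 - v) ^ 2 = 1 - v := Real.sq_sqrt h1.le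
  have hz2 : Real.sqrt (1 + v) ^ 2 = 1 + v := Real.sq_sqrt h2.le
  have hsum : 1 ≤ Real.sqrt (1 - v) + Real.sqrt (1 + v) := by nlinarith
  rw [hs, e1, e2, one_div, mul_inv]
  simp only [inv_eq_one_div]
  rw [div_add_div _ _ (ne_of_gt hs1) (ne_of_gt hs2),
    div_mul_div_comm, div_le_div_iff₀ (by positivity) (by positivity)]
  nlinarith [mul_le_mul_of_nonneg_right hsum (mul_pos hs1 hs2).le]





theorem cone_area_convex (b : ℝ) (hb : 0 < b) :
    (∀ a : ℝ,
      iteratedDeriv 2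
          (fun a : ℝ => ∫ v in (-1:ℝ)..1,
            Real.sqrt (((1 - a * v) ^ 2 + b ^ 2) / (1 - v ^ 2))) a =
        (∫ v in (-1:ℝ)..1,
          b ^ 2 * v ^ 2 /
            (((1 - a * v) ^ 2 + b ^ 2) ^ ((3 : ℝ) / 2) * Real.sqrt (1 - v ^ 2))) ∧
      0 < ∫ v in (-1:ℝ)..1,
            b ^ 2 * v ^ 2 /
              (((1 - a * v) ^ 2 + b ^ 2) ^ ((3 : ℝ) / 2) * Real.sqrt (1 - v ^ 2))) ∧
    StrictConvexOn ℝ Set.univ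
      (fun a : ℝ => ∫ v in (-1:ℝ)..1,
        Real.sqrt (((1 - a * v) ^ 2 + b ^ 2) / (1 - v ^ 2))) := by
  set g0 : ℝ → ℝ → ℝ := fun a v => Real.sqrt (((1 - a * v) ^ 2 + b ^ 2) / (1 - v ^ 2)) with hg0
  set g1 : ℝ → ℝ → ℝ := fun a v =>
    -(v * (1 - a * v)) / (Real.sqrt ((1 - a * v) ^ 2 + b ^ 2) * Real.sqrt (1 - v ^ 2)) with hg1
  set g2 : ℝ → ℝ → ℝ := fun a v =>
    b ^ 2 * v ^ 2 / (((1 - a * v) ^ 2 + b ^ 2) ^ ((3 : ℝ) / 2) * Real.sqrt (1 - v ^ 2)) with hg2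
  set B : ℝ → ℝ := fun v => (1 - v) ^ (-(1/2) : ℝ) + (1 + v) ^ (-(1/2) : ℝ) with hBdef
  have hne1 : ∀ᵐ v : ℝ ∂volume, v ≠ (1:ℝ) := by
    have hset : {v : ℝ | ¬ v ≠ (1:ℝ)} = {1} := by ext v; simp
    rw [MeasureTheory.ae_iff, hset]
    exact Real.volume_singleton
  have haemem : ∀ᵐ v : ℝ ∂volume, v ∈ Ι (-1:ℝ) 1 → v ∈ Set.Ioo (-1:ℝ) 1 := by
    filter_upwards [hne1] with v hv hmem
    rw [Set.uIoc_of_le (by norm_num : (-1:ℝ) ≤ 1)] at hmem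
    exact ⟨hmem.1, lt_of_le_of_ne hmem.2 hv⟩
  have haer : ∀ᵐ v ∂(volume.restrict (Ι (-1:ℝ) 1)), v ∈ Set.Ioo (-1:ℝ) 1 := by
    filter_upwards [MeasureTheory.ae_restrict_mem measurableSet_uIoc,
      MeasureTheory.ae_restrict_of_ae hne1] with v hv hne
    rw [Set.uIoc_of_le (by norm_num : (-1:ℝ) ≤ 1)] at hv
    exact ⟨hv.1, lt_of_le_of_ne hv.2 hne⟩
  -- measurability
  have c2 : Continuous fun v : ℝ => 1 - v ^ 2 := by fun_prop
  have hc1 : ∀ a : ℝ, Continuous fun v : ℝ => (1 - a * v) ^ 2 + b ^ 2 := by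
    intro a; fun_prop
  have hm0 : ∀ a : ℝ, AEStronglyMeasurable (g0 a) (volume.restrict (Ι (-1:ℝ) 1)) := by
    intro a
    exact (((hc1 a).measurable.div c2.measurable).sqrt).aestronglyMeasurable
  have hm1 : ∀ a : ℝ, AEStronglyMeasurable (g1 a) (volume.restrict (Ι (-1:ℝ) 1)) := by
    intro a
    have hnum : Continuous fun v : ℝ => -(v * (1 - a * v)) := by fun_prop
    exact (hnum.measurable.div
      ((hc1 a).measurable.sqrt.mul c2.measurable.sqrt)).aestronglyMeasurable
  have hm2 : ∀ a : ℝ, AEStronglyMeasurable (g2 a) (volume.restrict (Ι (-1:ℝ) 1)) := by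
    intro a
    have hnum : Continuous fun v : ℝ => b ^ 2 * v ^ 2 := by fun_prop
    have hden : Continuous fun v : ℝ => ((1 - a * v) ^ 2 + b ^ 2) ^ ((3:ℝ)/2) :=
      (hc1 a).rpow_const fun v => Or.inl (by positivity)
    exact (hnum.measurable.div
      (hden.measurable.mul c2.measurable.sqrt)).aestronglyMeasurable
  -- basic positivity facts
  have hBnn : ∀ v ∈ Set.Ioo (-1:ℝ) 1, 0 ≤ B v := by
    intro v hv
    have h1 : (0:ℝ) ≤ 1 - v := by linarith [hv.2]
    have h2 : (0:ℝ) ≤ 1 + v := by linarith [hv.1]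
    exact add_nonneg (Real.rpow_nonneg h1 _) (Real.rpow_nonneg h2 _)
  -- bound on g1, uniform in a
  have hb1 : ∀ x : ℝ, ∀ v ∈ Set.Ioo (-1:ℝ) 1, ‖g1 x v‖ ≤ B v := by
    intro x v hv
    have h1v : 0 < 1 - v ^ 2 := by nlinarith [hv.1, hv.2]
    have hQx : 0 < (1 - x * v) ^ 2 + b ^ 2 := by positivity
    have hsQ : 0 < Real.sqrt ((1 - x * v) ^ 2 + b ^ 2) := Real.sqrt_pos.mpr hQx
    have hs : 0 < Real.sqrt (1 - v ^ 2) := Real.sqrt_pos.mpr h1v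
    have habs : |(-(v * (1 - x * v)))| ≤ Real.sqrt ((1 - x * v) ^ 2 + b ^ 2) := by
      rw [abs_neg, abs_mul]
      have h1 : |v| ≤ 1 := by rw [abs_le]; exact ⟨hv.1.le, hv.2.le⟩
      have h2 : |1 - x * v| ≤ Real.sqrt ((1 - x * v) ^ 2 + b ^ 2) := by
        rw [← Real.sqrt_sq_eq_abs]
        exact Real.sqrt_le_sqrt (by nlinarith [sq_nonneg b])
      calc |v| * |1 - x * v| ≤ 1 * Real.sqrt ((1 - x * v) ^ 2 + b ^ 2) :=
            mul_le_mul h1 h2 (abs_nonneg _) zero_le_one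
        _ = Real.sqrt ((1 - x * v) ^ 2 + b ^ 2) := one_mul _
    have : ‖g1 x v‖ ≤ 1 / Real.sqrt (1 - v ^ 2) := by
      rw [hg1]
      simp only [Real.norm_eq_abs]
      rw [abs_div, abs_of_nonneg (by positivity :
        (0:ℝ) ≤ Real.sqrt ((1 - x * v) ^ 2 + b ^ 2) * Real.sqrt (1 - v ^ 2))]
      rw [div_le_div_iff₀ (by positivity) hs]
      calc |(-(v * (1 - x * v)))| * Real.sqrt (1 - v ^ 2)
          ≤ Real.sqrt ((1 - x * v) ^ 2 + b ^ 2) * Real.sqrt (1 - v ^ 2) := by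
            gcongr
        _ = 1 * (Real.sqrt ((1 - x * v) ^ 2 + b ^ 2) * Real.sqrt (1 - v ^ 2)) := by ring
    exact this.trans (lemComp hv)
  -- bound on g2, uniform in a
  have hb2 : ∀ x : ℝ, ∀ v ∈ Set.Ioo (-1:ℝ) 1, ‖g2 x v‖ ≤ (1 / b) * B v := by
    intro x v hv
    have h1v : 0 < 1 - v ^ 2 := by nlinarith [hv.1, hv.2]
    have hQx : 0 < (1 - x * v) ^ 2 + b ^ 2 := by positivity
    have hs : 0 < Real.sqrt (1 - v ^ 2) := Real.sqrt_pos.mpr h1v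
    have hQ32 : (b:ℝ) ^ 3 ≤ ((1 - x * v) ^ 2 + b ^ 2) ^ ((3:ℝ)/2) := by
      have h1 : ((b:ℝ) ^ 2) ^ ((3:ℝ)/2) = b ^ 3 := by
        rw [← Real.rpow_natCast b 2, ← Real.rpow_mul hb.le]
        norm_num
      rw [← h1]
      exact Real.rpow_le_rpow (by positivity) (by nlinarith [sq_nonneg (1 - x*v)]) (by norm_num)
    have hnn : 0 ≤ g2 x v := by positivity
    rw [Real.norm_eq_abs, abs_of_nonneg hnn, hg2]
    have hv2 : v ^ 2 ≤ 1 := by nlinarith [hv.1, hv.2]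
    calc b ^ 2 * v ^ 2 / (((1 - x * v) ^ 2 + b ^ 2) ^ ((3:ℝ)/2) * Real.sqrt (1 - v ^ 2))
        ≤ b ^ 2 * 1 / (b ^ 3 * Real.sqrt (1 - v ^ 2)) :=
          div_le_div₀ (mul_nonneg (sq_nonneg b) zero_le_one)
            (mul_le_mul_of_nonneg_left hv2 (sq_nonneg b))
            (mul_pos (pow_pos hb 3) hs)
            (mul_le_mul_of_nonneg_right hQ32 hs.le)
      _ = (1 / b) * (1 / Real.sqrt (1 - v ^ 2)) := by
          field_simp
      _ ≤ (1 / b) * B v :=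
          mul_le_mul_of_nonneg_left (lemComp hv) (by positivity)
  -- integrability of g0 a
  have hint0 : ∀ a : ℝ, IntervalIntegrable (g0 a) volume (-1) 1 := by
    intro a
    set C : ℝ := Real.sqrt ((1 + |a|) ^ 2 + b ^ 2) with hC
    have hCnn : 0 ≤ C := Real.sqrt_nonneg _
    apply (lemBint.const_mul C).mono_fun (hm0 a)
    filter_upwards [haer] with v hv
    have h1v : 0 < 1 - v ^ 2 := by nlinarith [hv.1, hv.2]
    have hQx : 0 < (1 - a * v) ^ 2 + b ^ 2 := by positivity
    have hs : 0 < Real.sqrt (1 - v ^ 2) := Real.sqrt_pos.mpr h1v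
    have hQle : Real.sqrt ((1 - a * v) ^ 2 + b ^ 2) ≤ C := by
      apply Real.sqrt_le_sqrt
      have hav : |a * v| ≤ |a| := by
        rw [abs_mul]
        have : |v| ≤ 1 := by rw [abs_le]; exact ⟨hv.1.le, hv.2.le⟩
        nlinarith [abs_nonneg a]
      have := abs_le.mp hav
      nlinarith [abs_nonneg a]
    have hg0v : g0 a v = Real.sqrt ((1 - a * v) ^ 2 + b ^ 2) / Real.sqrt (1 - v ^ 2) := by
      rw [hg0]; exact Real.sqrt_div (by positivity) _
    simp only [Real.norm_eq_abs]
    rw [hg0v, abs_of_nonneg (by positivity), abs_of_nonneg (mul_nonneg hCnn (hBnn v hv))]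
    calc Real.sqrt ((1 - a * v) ^ 2 + b ^ 2) / Real.sqrt (1 - v ^ 2)
        ≤ C / Real.sqrt (1 - v ^ 2) := by gcongr
      _ = C * (1 / Real.sqrt (1 - v ^ 2)) := by ring
      _ ≤ C * B v := by gcongr; exact lemComp hv
  -- first derivative step
  have step1 : ∀ a₀ : ℝ, IntervalIntegrable (g1 a₀) volume (-1) 1 ∧
      HasDerivAt (fun a => ∫ v in (-1:ℝ)..1, g0 a v) (∫ v in (-1:ℝ)..1, g1 a₀ v) a₀ := by
    intro a₀
    apply intervalIntegral.hasDerivAt_integral_of_dominated_loc_of_deriv_le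
      (F := g0) (F' := g1) (bound := B) (s := Metric.ball a₀ 1) (Metric.ball_mem_nhds a₀ one_pos)
    · exact Filter.Eventually.of_forall fun x => hm0 x
    · exact hint0 a₀
    · exact hm1 a₀
    · filter_upwards [haemem] with v hv hmem x _
      exact hb1 x v (hv hmem)
    · exact lemBint
    · filter_upwards [haemem] with v hv hmem x _
      exact lemA hb (hv hmem) x
  -- second derivative step
  have step2 : ∀ a₀ : ℝ, IntervalIntegrable (g2 a₀) volume (-1) 1 ∧
      HasDerivAt (fun a => ∫ v in (-1:ℝ)..1, g1 a v) (∫ v in (-1:ℝ)..1, g2 a₀ v) a₀ := by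
    intro a₀
    apply intervalIntegral.hasDerivAt_integral_of_dominated_loc_of_deriv_le
      (F := g1) (F' := g2) (bound := fun v => (1 / b) * B v) (s := Metric.ball a₀ 1) (Metric.ball_mem_nhds a₀ one_pos)
    · exact Filter.Eventually.of_forall fun x => hm1 x
    · exact (step1 a₀).1
    · exact hm2 a₀
    · filter_upwards [haemem] with v hv hmem x _
      exact hb2 x v (hv hmem)
    · exact lemBint.const_mul (1 / b)
    · filter_upwards [haemem] with v hv hmem x _
      exact lemB hb (hv hmem) x
  have hderivF : (deriv fun a => ∫ v in (-1:ℝ)..1, g0 a v)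
      = fun a => ∫ v in (-1:ℝ)..1, g1 a v := funext fun a => (step1 a).2.deriv
  have part1 : ∀ a : ℝ, iteratedDeriv 2 (fun a => ∫ v in (-1:ℝ)..1, g0 a v) a
      = ∫ v in (-1:ℝ)..1, g2 a v := by
    intro a
    rw [iteratedDeriv_succ, iteratedDeriv_one, hderivF]
    exact (step2 a).2.deriv
  have part2 : ∀ a : ℝ, 0 < ∫ v in (-1:ℝ)..1, g2 a v := by
    intro a
    refine (intervalIntegral.integral_pos_iff_support_of_nonneg_ae
      (Filter.Eventually.of_forall fun v => ?_) (step2 a).1).mpr ⟨by norm_num, ?_⟩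
    · rw [hg2]; positivity
    · have hsub : Set.Ioo (0:ℝ) 1 ⊆ Function.support (g2 a) ∩ Set.Ioc (-1:ℝ) 1 := by
        intro v hv
        have h1v : 0 < 1 - v ^ 2 := by nlinarith [hv.1, hv.2]
        have hQx : 0 < (1 - a * v) ^ 2 + b ^ 2 := by positivity
        constructor
        · apply Function.mem_support.mpr
          apply ne_of_gt
          rw [hg2]
          have hnum : 0 < b ^ 2 * v ^ 2 :=
            mul_pos (pow_pos hb 2) (pow_pos hv.1 2)
          exact div_pos hnum
            (mul_pos (Real.rpow_pos_of_pos hQx _) (Real.sqrt_pos.mpr h1v))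
        · exact ⟨by linarith [hv.1], hv.2.le⟩
      calc (0:ENNReal) < volume (Set.Ioo (0:ℝ) 1) := by
            rw [Real.volume_Ioo]; norm_num
        _ ≤ volume (Function.support (g2 a) ∩ Set.Ioc (-1:ℝ) 1) := measure_mono hsub
  have part3 : StrictConvexOn ℝ Set.univ (fun a => ∫ v in (-1:ℝ)..1, g0 a v) := by
    apply strictConvexOn_of_deriv2_pos convex_univ
    · exact (Differentiable.continuous fun a => (step1 a).2.differentiableAt).continuousOn
    · intro x _
      rw [← iteratedDeriv_eq_iterate, part1 x]
      exact part2 x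
  exact ⟨fun a => ⟨part1 a, part2 a⟩, part3⟩
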